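/- Let λ_1 ≥ λ_2 ≥ … ≥ λ_n ≥ 0 be real numbers, ğ ∈ ℝⁿ, τ > 0, and C > 0 with (1/n)·Σ_{i=1}^n ğ_i² ≤ C. Let r ∈ {1,…,n} be such that λ_r > 0 and ğ_i = 0 for all i > r, and suppose the spectral survival function S(t) := (1/n)·Σ_{i : λ_i > t} ğ_i² satisfies the tail bound with exponent β = 2: S(t) ≤ C·(λ_r/t)² for all t > 0. If ξ := λ_r/τ < e^{−1/2}, then (1/n)·Σ_{i=1}^n ğ_i²·λ_i²/(λ_i + τ)² ≤ 4C·log(1/ξ)·ξ^{2 − 1/log(1/ξ)}. -/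

import Mathlib

lemma aux_log (x y : ℝ) (hx : 0 < x) (hxy : x ≤ y) :
    y^2 - x^2 ≤ 2*y^2*(Real.log y - Real.log x) := by
  have hy : 0 < y := hx.trans_le hxy
  have h1 := Real.log_le_sub_one_of_pos (div_pos hx hy)
  rw [Real.log_div hx.ne' hy.ne'] at h1
  have h3 : 2*y^2*(x/y - 1) = 2*x*y - 2*y^2 := by field_simp
  nlinarith [mul_le_mul_of_nonneg_left h1 (by positivity : (0:ℝ) ≤ 2*y^2), sq_nonneg (x - y)]

noncomputable def Gh (m τ x : ℝ) : ℝ :=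
  if x ≤ m then x^2 else m^2 + 2*m^2*(Real.log (min x τ) - Real.log m)

lemma aux_key (m τ C P a b : ℝ) (hm : 0 < m) (hmτ : m < τ) (hC : 0 < C)
    (hP0 : 0 ≤ P) (hPC : P ≤ C) (hPa : P * a^2 ≤ C * m^2)
    (hb : 0 ≤ b) (hba : b ≤ a) :
    P * (min (τ^2) (a^2) - min (τ^2) (b^2)) ≤ C * (Gh m τ a - Gh m τ b) := by
  have hτ0 : 0 < τ := hm.trans hmτ
  rcases le_or_gt a m with hA | hA
  · -- a ≤ m
    have hbm : b ≤ m := hba.trans hA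
    have h1 : min (τ^2) (a^2) = a^2 := min_eq_right (pow_le_pow_left₀ (hb.trans hba) (hA.trans hmτ.le) 2)
    have h2 : min (τ^2) (b^2) = b^2 := min_eq_right (pow_le_pow_left₀ hb (hbm.trans hmτ.le) 2)
    rw [h1, h2, Gh, Gh, if_pos hA, if_pos hbm]
    have : b^2 ≤ a^2 := pow_le_pow_left₀ hb hba 2
    nlinarith [mul_le_mul_of_nonneg_right hPC (by linarith : (0:ℝ) ≤ a^2 - b^2)]
  · -- m < a
    have ha0 : 0 < a := hm.trans hA
    have hGa : Gh m τ a = m^2 + 2*m^2*(Real.log (min a τ) - Real.log m) := by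
      rw [Gh, if_neg (not_le.mpr hA)]
    rcases le_or_gt b m with hB | hB
    · -- b ≤ m < a
      have hGb : Gh m τ b = b^2 := by rw [Gh, if_pos hB]
      have h2 : min (τ^2) (b^2) = b^2 := min_eq_right (pow_le_pow_left₀ hb (hB.trans hmτ.le) 2)
      have hb2m : b^2 ≤ m^2 := pow_le_pow_left₀ hb hB 2
      have i3 : (C-P)*b^2 ≤ (C-P)*m^2 := mul_le_mul_of_nonneg_left hb2m (by linarith)
      rcases le_or_gt a τ with hAτ | hAτ
      · -- B1 : b ≤ m < a ≤ τ
        have h1 : min (τ^2) (a^2) = a^2 := min_eq_right (pow_le_pow_left₀ ha0.le hAτ 2)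
        rw [h1, h2, hGa, hGb, min_eq_left hAτ]
        have hΔ0 : 0 ≤ Real.log a - Real.log m :=
          sub_nonneg.mpr (Real.log_le_log hm hA.le)
        have hal := aux_log m a hm hA.le
        have i1 : P*(a^2 - m^2) ≤ 2*(P*a^2)*(Real.log a - Real.log m) := by
          have h := mul_le_mul_of_nonneg_left hal hP0; linarith [h]
        have i2 : (P*a^2)*(Real.log a - Real.log m) ≤ (C*m^2)*(Real.log a - Real.log m) :=
          mul_le_mul_of_nonneg_right hPa hΔ0
        linarith
      · -- B2 : b ≤ m < τ < a
        have h1 : min (τ^2) (a^2) = τ^2 := min_eq_left (pow_le_pow_left₀ hτ0.le hAτ.le 2)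
        rw [h1, h2, hGa, hGb, min_eq_right hAτ.le]
        have hΔ0 : 0 ≤ Real.log τ - Real.log m :=
          sub_nonneg.mpr (Real.log_le_log hm hmτ.le)
        have hal := aux_log m τ hm hmτ.le
        have hτa : τ^2 ≤ a^2 := pow_le_pow_left₀ hτ0.le hAτ.le 2
        have i1 : P*(τ^2 - m^2) ≤ 2*(P*τ^2)*(Real.log τ - Real.log m) := by
          have h := mul_le_mul_of_nonneg_left hal hP0; linarith [h]
        have i2 : (P*τ^2)*(Real.log τ - Real.log m) ≤ (P*a^2)*(Real.log τ - Real.log m) :=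
          mul_le_mul_of_nonneg_right (mul_le_mul_of_nonneg_left hτa hP0) hΔ0
        have i2' : (P*a^2)*(Real.log τ - Real.log m) ≤ (C*m^2)*(Real.log τ - Real.log m) :=
          mul_le_mul_of_nonneg_right hPa hΔ0
        linarith
    · -- m < b ≤ a
      have hb0 : 0 < b := hm.trans hB
      have hGb : Gh m τ b = m^2 + 2*m^2*(Real.log (min b τ) - Real.log m) := by
        rw [Gh, if_neg (not_le.mpr hB)]
      rcases le_or_gt a τ with hAτ | hAτ
      · -- C1 : m < b ≤ a ≤ τ
        have hbτ : b ≤ τ := hba.trans hAτ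
        have h1 : min (τ^2) (a^2) = a^2 := min_eq_right (pow_le_pow_left₀ ha0.le hAτ 2)
        have h2 : min (τ^2) (b^2) = b^2 := min_eq_right (pow_le_pow_left₀ hb0.le hbτ 2)
        rw [h1, h2, hGa, hGb, min_eq_left hAτ, min_eq_left hbτ]
        have hΔ0 : 0 ≤ Real.log a - Real.log b :=
          sub_nonneg.mpr (Real.log_le_log hb0 hba)
        have hal := aux_log b a hb0 hba
        have i1 : P*(a^2 - b^2) ≤ 2*(P*a^2)*(Real.log a - Real.log b) := by
          have h := mul_le_mul_of_nonneg_left hal hP0; linarith [h]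
        have i2 : (P*a^2)*(Real.log a - Real.log b) ≤ (C*m^2)*(Real.log a - Real.log b) :=
          mul_le_mul_of_nonneg_right hPa hΔ0
        linarith
      · rcases le_or_gt b τ with hBτ | hBτ
        · -- C2 : m < b ≤ τ < a
          have h1 : min (τ^2) (a^2) = τ^2 := min_eq_left (pow_le_pow_left₀ hτ0.le hAτ.le 2)
          have h2 : min (τ^2) (b^2) = b^2 := min_eq_right (pow_le_pow_left₀ hb0.le hBτ 2)
          rw [h1, h2, hGa, hGb, min_eq_right hAτ.le, min_eq_left hBτ]
          have hΔ0 : 0 ≤ Real.log τ - Real.log b :=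
            sub_nonneg.mpr (Real.log_le_log hb0 hBτ)
          have hal := aux_log b τ hb0 hBτ
          have hτa : τ^2 ≤ a^2 := pow_le_pow_left₀ hτ0.le hAτ.le 2
          have i1 : P*(τ^2 - b^2) ≤ 2*(P*τ^2)*(Real.log τ - Real.log b) := by
            have h := mul_le_mul_of_nonneg_left hal hP0; linarith [h]
          have i2 : (P*τ^2)*(Real.log τ - Real.log b) ≤ (P*a^2)*(Real.log τ - Real.log b) :=
            mul_le_mul_of_nonneg_right (mul_le_mul_of_nonneg_left hτa hP0) hΔ0
          have i2' : (P*a^2)*(Real.log τ - Real.log b) ≤ (C*m^2)*(Real.log τ - Real.log b) :=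
            mul_le_mul_of_nonneg_right hPa hΔ0
          linarith
        · -- C3 : τ < b ≤ a
          have h1 : min (τ^2) (a^2) = τ^2 := min_eq_left (pow_le_pow_left₀ hτ0.le (hBτ.le.trans hba) 2)
          have h2 : min (τ^2) (b^2) = τ^2 := min_eq_left (pow_le_pow_left₀ hτ0.le hBτ.le 2)
          rw [h1, h2, hGa, hGb, min_eq_right hAτ.le, min_eq_right hBτ.le]
          simp

lemma aux_abel (m τ C : ℝ) (hm : 0 < m) (hmτ : m < τ) (hC : 0 < C)
    (lam' : ℕ → ℝ) (a : ℕ → ℝ) (ha : ∀ j, 0 ≤ a j)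
    (hmono : ∀ j k : ℕ, j ≤ k → lam' k ≤ lam' j) (hnn : ∀ j, 0 ≤ lam' j)
    (hP : ∀ k : ℕ, (∑ j ∈ Finset.range (k+1), a j) ≤ C)
    (hPa : ∀ k : ℕ, (∑ j ∈ Finset.range (k+1), a j) * (lam' k)^2 ≤ C * m^2) :
    ∀ k : ℕ, ∑ j ∈ Finset.range k, a j * min (τ^2) ((lam' j)^2)
      ≤ C * Gh m τ (lam' 0) - C * Gh m τ (lam' k)
        + (∑ j ∈ Finset.range k, a j) * min (τ^2) ((lam' k)^2) := by
  intro k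
  induction k with
  | zero => simp
  | succ k ih =>
    rw [Finset.sum_range_succ, Finset.sum_range_succ (f := a)]
    have hP0 : 0 ≤ ∑ j ∈ Finset.range (k+1), a j :=
      Finset.sum_nonneg (fun j _ => ha j)
    have hkey := aux_key m τ C (∑ j ∈ Finset.range (k+1), a j) (lam' k) (lam' (k+1))
      hm hmτ hC hP0 (hP k) (hPa k) (hnn (k+1)) (hmono k (k+1) (Nat.le_succ k))
    rw [Finset.sum_range_succ a k] at hkey
    linarith [hkey, ih]

set_option maxHeartbeats 1000000 in
theorem stmt9 {n : ℕ} (lam : Fin n → ℝ)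
    (hord : ∀ i j : Fin n, i ≤ j → lam j ≤ lam i)
    (hnn : ∀ i, 0 ≤ lam i)
    (g : Fin n → ℝ) (τ : ℝ) (hτ : 0 < τ)
    (C : ℝ) (hC : 0 < C)
    (hbound : (1/(n:ℝ)) * ∑ i, (g i)^2 ≤ C)
    (r : Fin n) (hr : 0 < lam r)
    (hg0 : ∀ i : Fin n, r < i → g i = 0)
    (hS : ∀ t : ℝ, 0 < t →
      (1/(n:ℝ)) * ∑ i ∈ Finset.univ.filter (fun i => t < lam i), (g i)^2
        ≤ C * (lam r / t) ^ (2:ℝ))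
    (hξ : lam r / τ < Real.exp (-(1/2))) :
    (1/(n:ℝ)) * ∑ i, (g i)^2 * (lam i)^2 / (lam i + τ)^2
      ≤ 4 * C * Real.log (1/(lam r / τ))
          * (lam r / τ) ^ (2 - 1/Real.log (1/(lam r / τ))) := by
  have hn : 0 < n := r.pos
  have hnR : (0:ℝ) < n := Nat.cast_pos.mpr hn
  set m := lam r with hmdef
  have hm : 0 < m := hr
  have hξpos : 0 < m/τ := div_pos hm hτ
  have hexp1 : Real.exp (-(1/2)) < 1 := by
    rw [Real.exp_lt_one_iff]; norm_num
  have hξ1 : m/τ < 1 := hξ.trans hexp1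
  have hmτ : m < τ := by rwa [div_lt_one hτ] at hξ1
  have hLeq : Real.log (1/(m/τ)) = Real.log τ - Real.log m := by
    rw [one_div, Real.log_inv, Real.log_div hm.ne' hτ.ne']; ring
  have hLhalf : 1/2 < Real.log τ - Real.log m := by
    have h1 : Real.log (m/τ) < Real.log (Real.exp (-(1/2))) := Real.log_lt_log hξpos hξ
    rw [Real.log_exp, Real.log_div hm.ne' hτ.ne'] at h1
    linarith
  -- extensions to ℕ
  set lam' : ℕ → ℝ := fun j => if h : j < n then lam ⟨j, h⟩ else 0 with hlam'def
  set g' : ℕ → ℝ := fun j => if h : j < n then g ⟨j, h⟩ else 0 with hg'def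
  have hlam'lt : ∀ (j : ℕ) (h : j < n), lam' j = lam ⟨j, h⟩ := by
    intro j h; simp [hlam'def, h]
  have hg'lt : ∀ (j : ℕ) (h : j < n), g' j = g ⟨j, h⟩ := by
    intro j h; simp [hg'def, h]
  have hlam'ge : ∀ j : ℕ, n ≤ j → lam' j = 0 := by
    intro j h; simp [hlam'def, Nat.not_lt.mpr h]
  have hg'ge : ∀ j : ℕ, n ≤ j → g' j = 0 := by
    intro j h; simp [hg'def, Nat.not_lt.mpr h]
  have hlam'nn : ∀ j, 0 ≤ lam' j := by
    intro j
    by_cases h : j < n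
    · rw [hlam'lt j h]; exact hnn _
    · rw [hlam'ge j (Nat.le_of_not_lt h)]
  have hlam'mono : ∀ j k : ℕ, j ≤ k → lam' k ≤ lam' j := by
    intro j k hjk
    by_cases hk : k < n
    · have hj : j < n := lt_of_le_of_lt hjk hk
      rw [hlam'lt j hj, hlam'lt k hk]
      exact hord ⟨j, hj⟩ ⟨k, hk⟩ hjk
    · rw [hlam'ge k (Nat.le_of_not_lt hk)]; exact hlam'nn j
  set a : ℕ → ℝ := fun j => (g' j)^2 / n with hadef
  have ha : ∀ j, 0 ≤ a j := fun j => by positivity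
  -- total mass bound
  have hPtot : ∀ k : ℕ, (∑ j ∈ Finset.range k, a j) ≤ C := by
    intro k
    have h1 : (∑ j ∈ Finset.range k, a j) ≤ ∑ j ∈ Finset.range (max k n), a j :=
      Finset.sum_le_sum_of_subset_of_nonneg
        (Finset.range_subset_range.mpr (le_max_left _ _)) (fun j _ _ => ha j)
    have h2 : (∑ j ∈ Finset.range (max k n), a j) = ∑ j ∈ Finset.range n, a j := by
      refine (Finset.sum_subset (Finset.range_subset_range.mpr (le_max_right _ _)) ?_).symm
      intro x hx hnx
      have : n ≤ x := Nat.le_of_not_lt (fun h => hnx (Finset.mem_range.mpr h))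
      rw [hadef]; simp [hg'ge x this]
    have h3 : (∑ j ∈ Finset.range n, a j) = (1/(n:ℝ)) * ∑ i, (g i)^2 := by
      rw [← Fin.sum_univ_eq_sum_range a n, Finset.mul_sum]
      apply Finset.sum_congr rfl
      intro i _
      rw [hadef]
      simp only []
      rw [hg'lt _ i.isLt]
      simp [Fin.eta]
      ring
    rw [h2] at h1
    rw [h3] at h1
    linarith
  -- spectral bound
  have hPa : ∀ k : ℕ, (∑ j ∈ Finset.range (k+1), a j) * (lam' k)^2 ≤ C * m^2 := by
    intro k
    by_cases hk0 : lam' k = 0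
    · rw [hk0]; norm_num; positivity
    · have hk : 0 < lam' k := lt_of_le_of_ne (hlam'nn k) (Ne.symm hk0)
      have hkn : k < n := by
        by_contra h
        exact hk0 (hlam'ge k (Nat.le_of_not_lt h))
      have hstep : ∀ t : ℝ, 0 < t → t < lam' k →
          (∑ j ∈ Finset.range (k+1), a j) * t^2 ≤ C * m^2 := by
        intro t ht htk
        have e1 : ∑ i ∈ Finset.univ.filter (fun i => t < lam i), (g i)^2
            = ∑ j ∈ Finset.range n, (if t < lam' j then (g' j)^2 else 0) := by
          rw [Finset.sum_filter,
            ← Fin.sum_univ_eq_sum_range (fun j => if t < lam' j then (g' j)^2 else 0) n]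
          apply Finset.sum_congr rfl
          intro i _
          rw [hlam'lt _ i.isLt, hg'lt _ i.isLt]
        have e2 : (∑ j ∈ Finset.range (k+1), (g' j)^2)
            ≤ ∑ j ∈ Finset.range n, (if t < lam' j then (g' j)^2 else 0) := by
          have e21 : (∑ j ∈ Finset.range (k+1), (g' j)^2)
              = ∑ j ∈ Finset.range (k+1), (if t < lam' j then (g' j)^2 else 0) := by
            apply Finset.sum_congr rfl
            intro j hj
            have hjk : j ≤ k := Nat.lt_succ_iff.mp (Finset.mem_range.mp hj)
            rw [if_pos (lt_of_lt_of_le htk (hlam'mono j k hjk))]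
          rw [e21]
          apply Finset.sum_le_sum_of_subset_of_nonneg (Finset.range_subset_range.mpr hkn)
          intro j _ _
          split <;> positivity
        have h3 := hS t ht
        have h4 : (m/t) ^ (2:ℝ) = (m/t)^(2:ℕ) := by
          rw [show ((2:ℝ)) = ((2:ℕ):ℝ) by norm_num, Real.rpow_natCast]
        rw [h4] at h3
        have h5 : (∑ j ∈ Finset.range (k+1), a j)
            = (1/(n:ℝ)) * ∑ j ∈ Finset.range (k+1), (g' j)^2 := by
          rw [Finset.mul_sum]
          apply Finset.sum_congr rfl
          intro j _
          rw [hadef]; ring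
        have h6 : (∑ j ∈ Finset.range (k+1), a j) ≤ C * (m/t)^(2:ℕ) := by
          rw [h5]
          calc (1/(n:ℝ)) * ∑ j ∈ Finset.range (k+1), (g' j)^2
              ≤ (1/(n:ℝ)) * ∑ i ∈ Finset.univ.filter (fun i => t < lam i), (g i)^2 := by
                apply mul_le_mul_of_nonneg_left _ (by positivity)
                rw [e1]; exact e2
            _ ≤ C * (m/t)^(2:ℕ) := h3
        calc (∑ j ∈ Finset.range (k+1), a j) * t^2
            ≤ (C * (m/t)^(2:ℕ)) * t^2 :=
              mul_le_mul_of_nonneg_right h6 (sq_nonneg t)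
          _ = C * m^2 := by field_simp
      by_contra hcon
      push_neg at hcon
      have hP0 : 0 ≤ ∑ j ∈ Finset.range (k+1), a j :=
        Finset.sum_nonneg (fun j _ => ha j)
      have hCm : 0 < C * m^2 := by positivity
      have hPpos : 0 < ∑ j ∈ Finset.range (k+1), a j := by
        rcases lt_or_eq_of_le hP0 with h | h
        · exact h
        · rw [← h] at hcon; simp at hcon; linarith
      set P := ∑ j ∈ Finset.range (k+1), a j with hPdef
      set t0 := m * Real.sqrt (C/P) with ht0def
      have ht0sq : t0^2 = C*m^2/P := by
        rw [ht0def, mul_pow, Real.sq_sqrt (by positivity : (0:ℝ) ≤ C/P)]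
        ring
      have ht0pos : 0 < t0 := by
        rw [ht0def]
        exact mul_pos hm (Real.sqrt_pos.mpr (by positivity))
      have h7 : t0^2 < (lam' k)^2 := by
        rw [ht0sq, div_lt_iff₀ hPpos]
        linarith
      have ht0lt : t0 < lam' k := lt_of_pow_lt_pow_left₀ 2 (hlam'nn k) h7
      have ht1 : 0 < (t0 + lam' k)/2 := by linarith
      have ht2 : (t0 + lam' k)/2 < lam' k := by linarith
      have hstep' := hstep _ ht1 ht2
      have h8 : t0^2 < ((t0 + lam' k)/2)^2 := by nlinarith
      have h9 : P * t0^2 = C * m^2 := by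
        rw [ht0sq]; field_simp
      have h10 : C*m^2 < P * (((t0 + lam' k)/2)^2) := by
        rw [← h9]; exact mul_lt_mul_of_pos_left h8 hPpos
      exact absurd hstep' (not_le.mpr h10)
  have habel := aux_abel m τ C hm hmτ hC lam' a ha hlam'mono hlam'nn
      (fun k => hPtot (k+1)) hPa n
  -- evaluate endpoints
  have hend : lam' n = 0 := hlam'ge n le_rfl
  have hGhn : Gh m τ (lam' n) = 0 := by rw [hend, Gh, if_pos hm.le]; norm_num
  have hHn : min (τ^2) ((lam' n)^2) = 0 := by
    rw [hend]
    norm_num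
    positivity
  have hG0 : Gh m τ (lam' 0) ≤ m^2 + 2*m^2*(Real.log τ - Real.log m) := by
    by_cases h : lam' 0 ≤ m
    · rw [Gh, if_pos h]
      have h1 : (lam' 0)^2 ≤ m^2 := pow_le_pow_left₀ (hlam'nn 0) h 2
      nlinarith [sq_nonneg m]
    · rw [Gh, if_neg h]
      have h0 : 0 < min (lam' 0) τ := lt_min (hm.trans (not_le.mp h)) (hm.trans hmτ)
      have h1 : Real.log (min (lam' 0) τ) ≤ Real.log τ :=
        Real.log_le_log h0 (min_le_right _ _)
      nlinarith [mul_le_mul_of_nonneg_left h1 (by positivity : (0:ℝ) ≤ 2*m^2)]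
  have hmain : (∑ j ∈ Finset.range n, a j * min (τ^2) ((lam' j)^2))
      ≤ C * (m^2 + 2*m^2*(Real.log τ - Real.log m)) := by
    rw [hGhn, hHn] at habel
    have h2 := mul_le_mul_of_nonneg_left hG0 hC.le
    simp only [mul_zero, sub_zero, add_zero] at habel
    linarith
  -- termwise domination and sum conversion
  have hconv : (1/(n:ℝ)) * ∑ i, (g i)^2 * (lam i)^2 / (lam i + τ)^2
      ≤ (1/τ^2) * ∑ j ∈ Finset.range n, a j * min (τ^2) ((lam' j)^2) := by
    have e : (∑ j ∈ Finset.range n, a j * min (τ^2) ((lam' j)^2))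
        = ∑ i : Fin n, (g i)^2/n * min (τ^2) ((lam i)^2) := by
      rw [← Fin.sum_univ_eq_sum_range (fun j => a j * min (τ^2) ((lam' j)^2)) n]
      apply Finset.sum_congr rfl
      intro i _
      rw [hadef]
      simp only []
      rw [hg'lt _ i.isLt, hlam'lt _ i.isLt]
    rw [e, Finset.mul_sum, Finset.mul_sum]
    apply Finset.sum_le_sum
    intro i _
    have hlami := hnn i
    have hden : 0 < (lam i + τ)^2 := by positivity
    rcases le_total (τ^2) ((lam i)^2) with hmin | hmin
    · rw [min_eq_left hmin]
      have key : (g i)^2 * (lam i)^2/(lam i+τ)^2 ≤ (g i)^2 := by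
        rw [div_le_iff₀ hden]
        nlinarith [mul_nonneg (sq_nonneg (g i)) (mul_nonneg hlami hτ.le),
          mul_nonneg (sq_nonneg (g i)) (sq_nonneg τ)]
      calc (1/(n:ℝ)) * ((g i)^2*(lam i)^2/(lam i+τ)^2)
          ≤ (1/(n:ℝ)) * (g i)^2 := mul_le_mul_of_nonneg_left key (by positivity)
        _ = 1/τ^2*((g i)^2/n*τ^2) := by field_simp
    · rw [min_eq_right hmin]
      have key : (g i)^2 * (lam i)^2/(lam i+τ)^2 ≤ (g i)^2*(lam i)^2/τ^2 := by
        rw [div_le_div_iff₀ hden (by positivity : (0:ℝ) < τ^2)]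
        nlinarith [mul_nonneg (sq_nonneg (g i * lam i))
          (by positivity : (0:ℝ) ≤ (lam i)^2 + 2*(lam i)*τ)]
      calc (1/(n:ℝ)) * ((g i)^2*(lam i)^2/(lam i+τ)^2)
          ≤ (1/(n:ℝ)) * ((g i)^2*(lam i)^2/τ^2) := mul_le_mul_of_nonneg_left key (by positivity)
        _ = 1/τ^2 * ((g i)^2/n * (lam i)^2) := by ring
  -- RHS computation
  rw [hLeq]
  have hLne : Real.log τ - Real.log m ≠ 0 := ne_of_gt (by linarith)
  have hlξ : Real.log (m/τ) = Real.log m - Real.log τ := Real.log_div hm.ne' hτ.ne'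
  have hrpow : (m/τ) ^ ((2:ℝ) - 1/(Real.log τ - Real.log m)) = Real.exp 1 * (m/τ)^2 := by
    rw [Real.rpow_def_of_pos hξpos, hlξ]
    rw [show (Real.log m - Real.log τ) * (2 - 1/(Real.log τ - Real.log m))
        = 1 + ((Real.log m - Real.log τ) + (Real.log m - Real.log τ)) by field_simp; ring]
    rw [Real.exp_add, Real.exp_add]
    rw [show Real.exp (Real.log m - Real.log τ) = m/τ by
      rw [← hlξ, Real.exp_log hξpos]]
    ring
  rw [hrpow]
  have he : (1:ℝ) ≤ Real.exp 1 := by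
    have := Real.add_one_le_exp 1; linarith
  have h1 : 1 + 2*(Real.log τ - Real.log m)
      ≤ 4*(Real.log τ - Real.log m)*Real.exp 1 := by
    nlinarith [mul_le_mul_of_nonneg_left he
      (by linarith : (0:ℝ) ≤ 4*(Real.log τ - Real.log m))]
  have hfin : (1/τ^2) * (C * (m^2 + 2*m^2*(Real.log τ - Real.log m)))
      ≤ 4 * C * (Real.log τ - Real.log m) * (Real.exp 1 * (m/τ)^2) := by
    rw [show (1/τ^2) * (C * (m^2 + 2*m^2*(Real.log τ - Real.log m)))
        = (C*(m^2/τ^2))*(1+2*(Real.log τ - Real.log m)) from by ring,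
      show 4 * C * (Real.log τ - Real.log m) * (Real.exp 1 * (m/τ)^2)
        = (C*(m^2/τ^2))*(4*(Real.log τ - Real.log m)*Real.exp 1) from by ring]
    exact mul_le_mul_of_nonneg_left h1 (by positivity)
  calc (1/(n:ℝ)) * ∑ i, (g i)^2 * (lam i)^2 / (lam i + τ)^2
      ≤ (1/τ^2) * ∑ j ∈ Finset.range n, a j * min (τ^2) ((lam' j)^2) := hconv
    _ ≤ (1/τ^2) * (C * (m^2 + 2*m^2*(Real.log τ - Real.log m))) :=
        mul_le_mul_of_nonneg_left hmain (by positivity)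
    _ ≤ _ := hfin
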